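/- Let q = p^m be a power of a prime p, a ∈ F_{q²} with a^{q+1} = −1, and L an n×n unitary matrix over F_{q²}. Suppose δ = 0, γ ∈ F_{q²} satisfies γ^{q+1} = 2−n with 2−n ≠ 0 in F_{q²}, θ ∈ F_{q²} is nonzero, β = aθγ, α = (1−n)β·γ^{−q}, and λ = 0. Then the code generated by the bordered matrix G (with first row (θ, β,…,β, α, λ(L₁+⋯+Lₙ)) and (i+1)-st row (δ, (Jₙ−Iₙ)ᵢ, γ, aLᵢ)) is a Hermitian self-dual code of length 2n+2 and dimension n+1. -/

import Mathlib

open Matrix BigOperators Finset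

/-- The Hermitian inner product `x * y = ∑ i, x i * (y i)^q` over `F_{q²}`. -/
def hermInner (q : ℕ) {F : Type} [CommRing F] {ι : Type} [Fintype ι]
    (x y : ι → F) : F :=
  ∑ i, x i * y i ^ q

/-- The Hermitian dual of a set of vectors. -/
def hermDual (q : ℕ) {F : Type} [CommRing F] {ι : Type} [Fintype ι]
    (C : Set (ι → F)) : Set (ι → F) :=
  {y | ∀ x ∈ C, hermInner q x y = 0}

/-- The code generated by a matrix: the span of its rows. -/
def rowSpan {F : Type} [Field F] {k : ℕ} {ι : Type} (G : Matrix (Fin k) ι F) :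
    Submodule F (ι → F) :=
  Submodule.span F (Set.range fun i => G i)

section Aux

variable {q : ℕ} {F : Type} [Field F] {ι : Type} [Fintype ι]

lemma hermInner_add_left (x x' y : ι → F) :
    hermInner q (x + x') y = hermInner q x y + hermInner q x' y := by
  simp [hermInner, add_mul, Finset.sum_add_distrib]

lemma hermInner_smul_left (c : F) (x y : ι → F) :
    hermInner q (c • x) y = c * hermInner q x y := by
  simp [hermInner, Finset.mul_sum, mul_assoc]

lemma hermInner_zero_left (y : ι → F) : hermInner q (0 : ι → F) y = 0 := by
  simp [hermInner]

lemma hermInner_add_right (hadd : ∀ u v : F, (u + v) ^ q = u ^ q + v ^ q)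
    (x y y' : ι → F) :
    hermInner q x (y + y') = hermInner q x y + hermInner q x y' := by
  simp only [hermInner, Pi.add_apply, hadd, mul_add, Finset.sum_add_distrib]

lemma hermInner_smul_right (c : F) (x y : ι → F) :
    hermInner q x (c • y) = c ^ q * hermInner q x y := by
  simp only [hermInner, Pi.smul_apply, smul_eq_mul, mul_pow, Finset.mul_sum]
  exact Finset.sum_congr rfl fun i _ => by ring

lemma hermInner_zero_right (hq0 : q ≠ 0) (x : ι → F) :
    hermInner q x (0 : ι → F) = 0 := by
  simp [hermInner, zero_pow hq0]

/-- The span of a mutually orthogonal set is contained in its own Hermitian dual. -/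
lemma span_subset_hermDual (hq0 : q ≠ 0)
    (hadd : ∀ u v : F, (u + v) ^ q = u ^ q + v ^ q)
    (S : Set (ι → F)) (h : ∀ x ∈ S, ∀ y ∈ S, hermInner q x y = 0) :
    (Submodule.span F S : Set (ι → F)) ⊆ hermDual q (Submodule.span F S) := by
  intro y hy x hx
  induction hx using Submodule.span_induction with
  | mem x hxS =>
    induction hy using Submodule.span_induction with
    | mem y hyS => exact h x hxS y hyS
    | zero => exact hermInner_zero_right hq0 x
    | add y z _ _ hy hz => rw [hermInner_add_right hadd, hy, hz, add_zero]
    | smul c y _ hy => rw [hermInner_smul_right, hy, mul_zero]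
  | zero => exact hermInner_zero_left y
  | add u v _ _ hu hv => rw [hermInner_add_left, hu, hv, add_zero]
  | smul c u _ hu => rw [hermInner_smul_left, hu, mul_zero]

lemma indep_map (e : F ≃+* F) {k : ℕ} (v : Fin k → ι → F)
    (h : LinearIndependent F v) :
    LinearIndependent F (fun i => fun j => e (v i j)) := by
  rw [Fintype.linearIndependent_iff] at h ⊢
  intro g hg i
  have h2 : ∑ i, e.symm (g i) • v i = 0 := by
    funext j
    have hj := congrFun hg j
    simp only [Finset.sum_apply, Pi.smul_apply, smul_eq_mul, Pi.zero_apply] at hj ⊢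
    have hj2 := congrArg e.symm hj
    rw [map_sum, map_zero] at hj2
    simpa [_root_.map_mul] using hj2
  have h3 := h (fun i => e.symm (g i)) h2 i
  have h4 := congrArg e h3
  simpa using h4

lemma sum_ite_ne (n : ℕ) (i : Fin n) :
    ∑ k, (if k = i then (0:F) else 1) = (n:F) - 1 := by
  have h : ∀ k : Fin n, (if k = i then (0:F) else 1) = 1 - (if k = i then 1 else 0) := by
    intro k; split <;> simp
  rw [Finset.sum_congr rfl fun k _ => h k, Finset.sum_sub_distrib, Finset.sum_const,
    Finset.sum_ite_eq' Finset.univ i (fun _ => (1:F))]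
  simp [Finset.card_univ]

lemma sum_ite_ne_mul (n : ℕ) (i j : Fin n) :
    ∑ k, (if k = i then (0:F) else 1) * (if k = j then (0:F) else 1)
      = (n:F) - 2 + (if i = j then 1 else 0) := by
  have h : ∀ k : Fin n, (if k = i then (0:F) else 1) * (if k = j then (0:F) else 1)
      = 1 - (if k = i then 1 else 0) - (if k = j then 1 else 0)
        + (if k = i then (if i = j then (1:F) else 0) else 0) := by
    intro k
    by_cases h1 : k = i <;> by_cases h2 : k = j <;> subst_vars <;> simp_all
  rw [Finset.sum_congr rfl fun k _ => h k]
  rw [Finset.sum_add_distrib, Finset.sum_sub_distrib, Finset.sum_sub_distrib,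
    Finset.sum_const, Finset.sum_ite_eq' Finset.univ i (fun _ => (1:F)),
    Finset.sum_ite_eq' Finset.univ j (fun _ => (1:F)),
    Finset.sum_ite_eq' Finset.univ i (fun _ => (if i = j then (1:F) else 0))]
  simp [Finset.card_univ]
  ring

lemma herm_expand {n : ℕ} (x y : (Unit ⊕ Fin n) ⊕ (Unit ⊕ Fin n) → F) :
    hermInner q x y =
      x (Sum.inl (Sum.inl ())) * (y (Sum.inl (Sum.inl ()))) ^ q
      + ∑ j, x (Sum.inl (Sum.inr j)) * (y (Sum.inl (Sum.inr j))) ^ q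
      + x (Sum.inr (Sum.inl ())) * (y (Sum.inr (Sum.inl ()))) ^ q
      + ∑ j, x (Sum.inr (Sum.inr j)) * (y (Sum.inr (Sum.inr j))) ^ q := by
  simp [hermInner, Fintype.sum_sum_type]
  ring

end Aux

/-- Theorem 1, case 1) of the paper. With `δ = 0`,
`γ^{q+1} = 2 - n ≠ 0`, `θ ≠ 0`, `β = aθγ`, `α = (1-n)β·γ^{-q}`, `λ = 0`,
the bordered matrix `G` generates a Hermitian self-dual code of length `2n+2`
and dimension `n+1`. -/
theorem stmt8 (p m q n : ℕ) (hp : p.Prime) (hm : 0 < m) (hq : q = p ^ m)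
    (F : Type) [Field F] [Fintype F] (hF : Fintype.card F = q ^ 2)
    (a : F) (ha : a ^ (q + 1) = -1)
    (L : Matrix (Fin n) (Fin n) F) (hL : L * (L.map (· ^ q))ᵀ = 1)
    (α β γ δ lam θ : F)
    (hδ : δ = 0)
    (hγ : γ ^ (q + 1) = 2 - (n : F)) (hγ0 : (2 : F) - (n : F) ≠ 0)
    (hθ : θ ≠ 0)
    (hβ : β = a * θ * γ)
    (hα : α = (1 - (n : F)) * β * (γ ^ q)⁻¹)
    (hlam : lam = 0)
    (G : Matrix (Fin (n + 1)) ((Unit ⊕ Fin n) ⊕ (Unit ⊕ Fin n)) F)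
    (hG1 : G 0 (Sum.inl (Sum.inl ())) = θ)
    (hG2 : ∀ j, G 0 (Sum.inl (Sum.inr j)) = β)
    (hG3 : G 0 (Sum.inr (Sum.inl ())) = α)
    (hG4 : ∀ j, G 0 (Sum.inr (Sum.inr j)) = lam * ∑ k, L k j)
    (hG5 : ∀ i : Fin n, G i.succ (Sum.inl (Sum.inl ())) = δ)
    (hG6 : ∀ i j : Fin n, G i.succ (Sum.inl (Sum.inr j)) = if j = i then 0 else 1)
    (hG7 : ∀ i : Fin n, G i.succ (Sum.inr (Sum.inl ())) = γ)
    (hG8 : ∀ i j : Fin n, G i.succ (Sum.inr (Sum.inr j)) = a * L i j) :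
    (rowSpan G : Set ((Unit ⊕ Fin n) ⊕ (Unit ⊕ Fin n) → F)) = hermDual q (rowSpan G) ∧
    Module.finrank F (rowSpan G) = n + 1 := by
  haveI hpf : Fact p.Prime := ⟨hp⟩
  -- the characteristic of F is p
  haveI hchar : CharP F p := by
    obtain ⟨r, hr⟩ := CharP.exists F
    haveI := hr
    have hrp : r.Prime := CharP.char_is_prime F r
    obtain ⟨k, -, hk⟩ := FiniteField.card F r
    have hpr : p = r := by
      have hdvd : p ∣ r ^ (k : ℕ) := by
        rw [← hk, hF, hq, ← pow_mul]
        exact dvd_pow_self p (by positivity)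
      exact (Nat.prime_dvd_prime_iff_eq hp hrp).mp (hp.dvd_of_dvd_pow hdvd)
    rwa [hpr]
  haveI : ExpChar F p := ExpChar.prime hp
  -- the Frobenius automorphism z ↦ z^q
  obtain ⟨e, he⟩ : ∃ e : F ≃+* F, ∀ z, e z = z ^ q :=
    ⟨RingEquiv.ofBijective (iterateFrobenius F p m)
      ((Finite.injective_iff_bijective).mp (RingHom.injective _)),
      fun z => by show iterateFrobenius F p m z = z ^ q; rw [iterateFrobenius_def, hq]⟩
  have hq0 : q ≠ 0 := by rw [hq]; exact (pow_pos hp.pos m).ne'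
  have hadd : ∀ u v : F, (u + v) ^ q = u ^ q + v ^ q := by
    intro u v
    rw [← he, ← he, ← he, map_add]
  have hpow2 : ∀ z : F, (z ^ q) ^ q = z := by
    intro z
    rw [← pow_mul, ← pow_two, ← hF, FiniteField.pow_card]
  have hesymm : ∀ z : F, e.symm (z ^ q) = z := by
    intro z; rw [← he, RingEquiv.symm_apply_apply]
  -- basic nonvanishing facts
  have hγne : γ ≠ 0 := by
    intro h
    apply hγ0
    rw [← hγ, h, zero_pow (by omega)]
  have hγqne : γ ^ q ≠ 0 := pow_ne_zero _ hγne
  have hane : a ≠ 0 := by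
    intro h
    have : (0:F) = -1 := by rw [← ha, h, zero_pow (by omega)]
    simpa using this.symm
  -- products with conjugates
  have haa : a * a ^ q = -1 := by rw [← pow_succ', ha]
  have hγγ : γ * γ ^ q = 2 - (n : F) := by rw [← pow_succ', hγ]
  have honen : (1 - (n : F)) ^ q = 1 - (n : F) := by
    rw [← he, map_sub]; simp
  have hββ : β * β ^ q = -(2 - (n : F)) * (θ * θ ^ q) := by
    rw [hβ, mul_pow, mul_pow,
      show a * θ * γ * (a ^ q * θ ^ q * γ ^ q)
        = (a * a ^ q) * ((θ * θ ^ q) * (γ * γ ^ q)) from by ring,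
      haa, hγγ]
    ring
  have hαq : α ^ q = (1 - (n : F)) * β ^ q * γ⁻¹ := by
    rw [hα, mul_pow, mul_pow, honen, inv_pow, hpow2]
  have hαα : α * α ^ q = -((1 - (n : F)) ^ 2) * (θ * θ ^ q) := by
    rw [hαq, hα,
      show (1 - (n:F)) * β * (γ ^ q)⁻¹ * ((1 - (n:F)) * β ^ q * γ⁻¹)
        = (1 - (n:F)) ^ 2 * (β * β ^ q) * (γ⁻¹ * (γ ^ q)⁻¹) from by ring,
      ← mul_inv, hγγ, hββ]
    field_simp
  have hαγq : α * γ ^ q = (1 - (n : F)) * β := by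
    rw [hα, mul_assoc, inv_mul_cancel₀ hγqne, mul_one]
  have hγαq : γ * α ^ q = (1 - (n : F)) * β ^ q := by
    rw [hαq, show γ * ((1 - (n:F)) * β ^ q * γ⁻¹)
      = (1 - (n:F)) * β ^ q * (γ * γ⁻¹) from by ring, mul_inv_cancel₀ hγne, mul_one]
  have hLij : ∀ i j : Fin n, ∑ k, L i k * (L j k) ^ q = if i = j then 1 else 0 := by
    intro i j
    have h := congrFun (congrFun hL i) j
    simpa [Matrix.mul_apply, Matrix.one_apply, Matrix.map_apply,
      Matrix.transpose_apply] using h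
  -- the rows are pairwise Hermitian-orthogonal
  have horth : ∀ r s : Fin (n + 1), hermInner q (G r) (G s) = 0 := by
    intro r s
    refine Fin.cases ?_ ?_ r <;> [skip; intro i] <;>
      refine Fin.cases ?_ ?_ s <;> [skip; intro j; skip; intro j]
    · -- row 0 with row 0
      rw [herm_expand, hG1, hG3]
      simp only [hG2, hG4, hlam, zero_mul, zero_pow hq0, mul_zero, Finset.sum_const,
        Finset.card_univ, Fintype.card_fin, nsmul_eq_mul, add_zero]
      rw [hββ, hαα]
      ring
    · -- row 0 with row j+1
      rw [herm_expand, hG1, hG3, hG5 j, hδ, hG7 j]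
      simp only [hG2, hG4, hG6, hG8, hlam, zero_mul, zero_pow hq0, mul_zero,
        add_zero, Finset.sum_const_zero]
      have h1 : ∀ k : Fin n, β * (if k = j then (0:F) else 1) ^ q
          = β * (if k = j then (0:F) else 1) := by
        intro k; split <;> simp [zero_pow hq0]
      rw [Finset.sum_congr rfl fun k _ => h1 k, ← Finset.mul_sum, sum_ite_ne, hαγq]
      ring
    · -- row i+1 with row 0
      rw [herm_expand, hG1, hG3, hG5 i, hδ, hG7 i]
      simp only [hG2, hG4, hG6, hG8, hlam, zero_mul, zero_pow hq0, mul_zero,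
        zero_add, Finset.sum_const_zero, add_zero]
      rw [← Finset.sum_mul, sum_ite_ne, hγαq]
      ring
    · -- row i+1 with row j+1
      rw [herm_expand, hG5 i, hG5 j, hδ, hG7 i, hG7 j]
      simp only [hG6, hG8, zero_mul, zero_pow hq0, mul_zero, zero_add]
      have h1 : ∀ k : Fin n, (if k = i then (0:F) else 1) * (if k = j then (0:F) else 1) ^ q
          = (if k = i then (0:F) else 1) * (if k = j then (0:F) else 1) := by
        intro k; split <;> split <;> simp [zero_pow hq0]
      have h2 : ∀ k : Fin n, a * L i k * (a * L j k) ^ q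
          = (a * a ^ q) * (L i k * (L j k) ^ q) := by
        intro k; rw [mul_pow]; ring
      rw [Finset.sum_congr rfl fun k _ => h1 k, sum_ite_ne_mul,
        Finset.sum_congr rfl fun k _ => h2 k, ← Finset.mul_sum, hLij, haa, hγγ]
      ring
  -- linear independence of the rows of G
  have hGindep : LinearIndependent F (fun i => G i) := by
    rw [Fintype.linearIndependent_iff]
    intro g hg
    have hcoord : ∀ c, ∑ i, g i * G i c = 0 := by
      intro c
      have := congrFun hg c
      simpa using this
    have hsucc : ∀ i : Fin n, g i.succ = 0 := by
      have hv : ∀ j, ∑ i : Fin n, g i.succ * L i j = 0 := by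
        intro j
        have h := hcoord (Sum.inr (Sum.inr j))
        rw [Fin.sum_univ_succ] at h
        simp only [hG4, hG8, hlam, zero_mul, mul_zero, zero_add] at h
        have h2 : a * ∑ i : Fin n, g i.succ * L i j = 0 := by
          rw [Finset.mul_sum]
          rw [← h]
          exact Finset.sum_congr rfl fun i _ => by ring
        exact (mul_eq_zero.mp h2).resolve_left hane
      set v : Fin n → F := fun i => g i.succ with hvdef
      have hvL : v ᵥ* L = 0 := by
        funext j
        simpa [Matrix.vecMul, dotProduct] using hv j
      have hBL : (L.map (· ^ q))ᵀ * L = 1 := mul_eq_one_comm.mp hL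
      have hv0 : v = 0 := by
        have h1 : v ᵥ* (L * (L.map (· ^ q))ᵀ) = v := by rw [hL, Matrix.vecMul_one]
        rw [← Matrix.vecMul_vecMul, hvL, Matrix.zero_vecMul] at h1
        exact h1.symm
      intro i
      exact congrFun hv0 i
    have h0 : g 0 = 0 := by
      have h := hcoord (Sum.inl (Sum.inl ()))
      rw [Fin.sum_univ_succ] at h
      simp only [hG1, hG5, hδ, hsucc, mul_zero, zero_mul, Finset.sum_const_zero,
        add_zero] at h
      exact (mul_eq_zero.mp h).resolve_right hθ
    intro i
    refine Fin.cases h0 hsucc i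
  -- the matrix with entries e.symm (G r c)
  set A : Matrix (Fin (n + 1)) ((Unit ⊕ Fin n) ⊕ (Unit ⊕ Fin n)) F :=
    fun r c => e.symm (G r c) with hA
  have hAindep : LinearIndependent F (fun i => A i) := indep_map e.symm _ hGindep
  set D := LinearMap.ker (Matrix.mulVecLin A) with hD
  -- the Hermitian dual of the row span is the kernel of A
  have hdual : hermDual q (rowSpan G : Set _)
      = (D : Set ((Unit ⊕ Fin n) ⊕ (Unit ⊕ Fin n) → F)) := by
    ext y
    constructor
    · intro hy
      show A.mulVec y = 0
      funext r
      have h := hy (G r) (Submodule.subset_span ⟨r, rfl⟩)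
      have h2 := congrArg e.symm h
      rw [hermInner, map_sum, map_zero] at h2
      simp only [Matrix.mulVec, dotProduct, Pi.zero_apply]
      rw [← h2]
      exact Finset.sum_congr rfl fun c _ => by
        rw [_root_.map_mul, hesymm]
    · intro hy x hx
      have hrow : ∀ r : Fin (n + 1), hermInner q (G r) y = 0 := by
        intro r
        have hyD : y ∈ D := hy
        have hy' : A.mulVec y = 0 := by
          have h0 := LinearMap.mem_ker.mp hyD
          rwa [Matrix.mulVecLin_apply] at h0
        have h := congrFun hy' r
        simp only [Matrix.mulVec, dotProduct, Pi.zero_apply] at h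
        have h2 := congrArg e h
        rw [map_sum, map_zero] at h2
        rw [hermInner, ← h2]
        exact Finset.sum_congr rfl fun c _ => by
          rw [_root_.map_mul, RingEquiv.apply_symm_apply, he]
      induction hx using Submodule.span_induction with
      | mem x hxS => obtain ⟨r, rfl⟩ := hxS; exact hrow r
      | zero => exact hermInner_zero_left y
      | add u v _ _ hu hv => rw [hermInner_add_left, hu, hv, add_zero]
      | smul c u _ hu => rw [hermInner_smul_left, hu, mul_zero]
  -- dimensions
  have hcardι : Fintype.card ((Unit ⊕ Fin n) ⊕ (Unit ⊕ Fin n)) = 2 * n + 2 := by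
    simp; ring
  have hfinrowG : Module.finrank F (rowSpan G) = n + 1 := by
    rw [rowSpan, finrank_span_eq_card hGindep, Fintype.card_fin]
  have hrankA : A.rank = n + 1 := by
    rw [← Matrix.rank_transpose, Matrix.rank, Matrix.range_mulVecLin]
    show Module.finrank F (Submodule.span F (Set.range fun i => A i)) = n + 1
    rw [finrank_span_eq_card hAindep, Fintype.card_fin]
  have hfinD : Module.finrank F D = n + 1 := by
    rw [hD]
    have hrn := LinearMap.finrank_range_add_finrank_ker (Matrix.mulVecLin A)
    rw [Module.finrank_fintype_fun_eq_card, hcardι] at hrn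
    have : Module.finrank F ↥(LinearMap.range (Matrix.mulVecLin A)) = n + 1 := hrankA
    omega
  -- self-orthogonality: rowSpan G ≤ D
  have hle : rowSpan G ≤ D := by
    have hsub : (rowSpan G : Set ((Unit ⊕ Fin n) ⊕ (Unit ⊕ Fin n) → F))
        ⊆ hermDual q (rowSpan G : Set ((Unit ⊕ Fin n) ⊕ (Unit ⊕ Fin n) → F)) := by
      apply span_subset_hermDual hq0 hadd
      rintro x ⟨r, rfl⟩ y ⟨s, rfl⟩
      exact horth r s
    rw [hdual] at hsub
    exact fun x hx => hsub hx
  have heq : rowSpan G = D :=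
    Submodule.eq_of_le_of_finrank_le hle (by rw [hfinD, hfinrowG])
  constructor
  · rw [hdual, heq]
  · exact hfinrowG
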